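/- arXiv:math/0206181 — 2 statements merged into one kernel-verified Lean document; each statement's English description precedes it below -/
import Mathlib

section
/- Let 1 ≤ p < ∞ and let X be a real Banach space. If there exists a Banach space Y finitely equivalent to X such that the ℓ_p-sum ℓ_p(Y) is finitely equivalent to X, then for every Banach space Z finitely equivalent to X, ℓ_p(Z) is also finitely equivalent to X. -/
open scoped ENNReal ZeroAtInfty

/-- A bundled real Banach space. -/
structure BanachSpace where
  carrier : Type
  [g : NormedAddCommGroup carrier]
  [s : NormedSpace ℝ carrier]
  [c : CompleteSpace carrier]

attribute [instance] BanachSpace.g BanachSpace.s BanachSpace.c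

instance : CoeSort BanachSpace Type := ⟨BanachSpace.carrier⟩

/-- `X` is finitely representable in `Y`: every finite-dimensional subspace of `X` is
`(1+ε)`-isomorphic to a subspace of `Y`. -/
def FinRep (X : Type*) [NormedAddCommGroup X] [NormedSpace ℝ X]
    (Y : Type*) [NormedAddCommGroup Y] [NormedSpace ℝ Y] : Prop :=
  ∀ ε : ℝ, 0 < ε → ∀ A : Subspace ℝ X, FiniteDimensional ℝ A →
    ∃ B : Subspace ℝ Y, ∃ u : A ≃L[ℝ] B,
      ‖(u : A →L[ℝ] B)‖ * ‖(u.symm : B →L[ℝ] A)‖ ≤ 1 + ε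

/-- `X` and `Y` are finitely equivalent. -/
def FinEquiv (X : Type*) [NormedAddCommGroup X] [NormedSpace ℝ X]
    (Y : Type*) [NormedAddCommGroup Y] [NormedSpace ℝ Y] : Prop :=
  FinRep X Y ∧ FinRep Y X


set_option maxHeartbeats 1000000
set_option synthInstance.maxHeartbeats 1000000
set_option linter.unusedSectionVars false

set_option synthInstance.maxHeartbeats 1000000

variable {W V : Type*} [NormedAddCommGroup W] [NormedSpace ℝ W]
  [NormedAddCommGroup V] [NormedSpace ℝ V]

lemma exists_equiv_of_bounds (A : Subspace ℝ W) [FiniteDimensional ℝ A]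
    (T : A →ₗ[ℝ] V) (c C : ℝ) (hc : 0 < c) (hC : 0 ≤ C)
    (hl : ∀ a : A, c * ‖a‖ ≤ ‖T a‖) (hu : ∀ a : A, ‖T a‖ ≤ C * ‖a‖) :
    ∃ B : Subspace ℝ V, ∃ u : A ≃L[ℝ] B,
      ‖(u : A →L[ℝ] B)‖ ≤ C ∧ ‖(u.symm : B →L[ℝ] A)‖ ≤ c⁻¹ := by
  have hinj : Function.Injective T := by
    intro a b hab
    have h0 : T (a - b) = 0 := by rw [map_sub, hab, sub_self]
    have h2 := hl (a - b)
    rw [h0, norm_zero] at h2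
    have h3 : ‖a - b‖ ≤ 0 := by nlinarith [norm_nonneg (a - b)]
    have : a - b = 0 := by
      rwa [← norm_le_zero_iff]
    exact sub_eq_zero.mp this
  set e : A ≃ₗ[ℝ] LinearMap.range T := LinearEquiv.ofInjective T hinj
  have he : ∀ a : A, ((e a : V)) = T a := fun a => rfl
  let u : A ≃L[ℝ] LinearMap.range T := e.toContinuousLinearEquiv
  refine ⟨LinearMap.range T, u, ?_, ?_⟩
  · refine ContinuousLinearMap.opNorm_le_bound _ hC fun a => ?_
    have : ‖(u : A →L[ℝ] LinearMap.range T) a‖ = ‖T a‖ := by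
      show ‖(e a : V)‖ = _
      rw [he]
    rw [this]; exact hu a
  · refine ContinuousLinearMap.opNorm_le_bound _ (by positivity) fun b => ?_
    have hb : (u : A →L[ℝ] _) ((u.symm : _ →L[ℝ] A) b) = b := u.apply_symm_apply b
    have h1 : ‖(b : V)‖ = ‖T ((u.symm : _ →L[ℝ] A) b)‖ := by
      conv_lhs => rw [← hb]
      rfl
    have := hl ((u.symm : _ →L[ℝ] A) b)
    rw [← h1] at this
    rw [inv_mul_eq_div, le_div_iff₀ hc, mul_comm]
    calc c * ‖(u.symm : _ →L[ℝ] A) b‖ ≤ ‖(b : V)‖ := this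
    _ = ‖b‖ := rfl

section
variable {X : Type*} [NormedAddCommGroup X] [NormedSpace ℝ X]
  {Y : Type*} [NormedAddCommGroup Y] [NormedSpace ℝ Y]
  {W : Type*} [NormedAddCommGroup W] [NormedSpace ℝ W]

/-- scaled form: one can take `‖u‖ ≤ 1+ε` and `‖u.symm‖ ≤ 1`. -/
lemma FinRep.scaled (h : FinRep X Y) (ε : ℝ) (hε : 0 < ε)
    (A : Subspace ℝ X) (hA : FiniteDimensional ℝ A) :
    ∃ B : Subspace ℝ Y, ∃ u : A ≃L[ℝ] B,
      ‖(u : A →L[ℝ] B)‖ ≤ 1 + ε ∧ ‖(u.symm : B →L[ℝ] A)‖ ≤ 1 := by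
  obtain ⟨B, u, hu⟩ := h ε hε A hA
  by_cases h0 : ‖(u.symm : B →L[ℝ] A)‖ = 0
  · have hs : (u.symm : B →L[ℝ] A) = 0 := by
      rwa [ContinuousLinearMap.opNorm_zero_iff] at h0
    -- then A is trivial, so ‖u‖ = 0 as well
    have hA0 : ∀ a : A, a = 0 := by
      intro a
      have : u.symm (u a) = a := u.symm_apply_apply a
      rw [← this]
      show (u.symm : B →L[ℝ] A) (u a) = 0
      rw [hs]; rfl
    have hu0 : ‖(u : A →L[ℝ] B)‖ ≤ 1 + ε := by
      refine ContinuousLinearMap.opNorm_le_bound _ (by positivity) fun a => ?_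
      rw [hA0 a]
      simp
    exact ⟨B, u, hu0, by rw [h0]; norm_num⟩
  · have hpos : 0 < ‖(u.symm : B →L[ℝ] A)‖ :=
      lt_of_le_of_ne (ContinuousLinearMap.opNorm_nonneg _) (Ne.symm h0)
    set r := ‖(u.symm : B →L[ℝ] A)‖ with hr
    haveI : FiniteDimensional ℝ B := u.toLinearEquiv.finiteDimensional
    let s : B ≃ₗ[ℝ] B := LinearEquiv.smulOfNeZero ℝ B r (ne_of_gt hpos)
    let sc : B ≃L[ℝ] B := s.toContinuousLinearEquiv
    have hsc : ∀ b : B, sc b = r • b := fun b => rfl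
    have hscs : ∀ b : B, sc.symm b = r⁻¹ • b := by
      intro b
      apply sc.injective
      rw [sc.apply_symm_apply, hsc, smul_smul, mul_inv_cancel₀ (ne_of_gt hpos), one_smul]
    refine ⟨B, u.trans sc, ?_, ?_⟩
    · refine ContinuousLinearMap.opNorm_le_bound _ (by positivity) fun a => ?_
      have : (u.trans sc) a = r • (u a) := hsc (u a)
      show ‖(u.trans sc) a‖ ≤ _
      rw [this, norm_smul, Real.norm_eq_abs, abs_of_pos hpos]
      calc r * ‖u a‖ ≤ r * (‖(u : A →L[ℝ] B)‖ * ‖a‖) :=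
            mul_le_mul_of_nonneg_left ((u : A →L[ℝ] B).le_opNorm a) hpos.le
        _ = ‖(u : A →L[ℝ] B)‖ * r * ‖a‖ := by ring
        _ ≤ (1 + ε) * ‖a‖ := by
            apply mul_le_mul_of_nonneg_right _ (norm_nonneg a)
            rw [hr]; exact hu
    · refine ContinuousLinearMap.opNorm_le_bound _ zero_le_one fun b => ?_
      have h1 : (u.trans sc).symm b = u.symm (sc.symm b) := rfl
      show ‖(u.trans sc).symm b‖ ≤ _
      rw [h1, hscs]
      calc ‖u.symm (r⁻¹ • b)‖ ≤ r * ‖r⁻¹ • b‖ := by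
            have := (u.symm : B →L[ℝ] A).le_opNorm (r⁻¹ • b)
            rw [← hr] at this; exact this
        _ = r * (r⁻¹ * ‖b‖) := by
            rw [norm_smul, Real.norm_eq_abs, abs_of_pos (inv_pos.mpr hpos)]
        _ = 1 * ‖b‖ := by field_simp
        _ ≤ 1 * ‖b‖ := le_rfl

lemma FinRep.trans (hXY : FinRep X Y) (hYW : FinRep Y W) : FinRep X W := by
  intro ε hε A hA
  set δ := min (ε / 3) 1 with hδdef
  have hδ : 0 < δ := lt_min (by positivity) one_pos
  have hδ1 : δ ≤ 1 := min_le_right _ _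
  have hδε : 3 * δ ≤ ε := by
    have := min_le_left (ε / 3) 1
    nlinarith
  obtain ⟨B, u, hu1, hu2⟩ := hXY.scaled δ hδ A hA
  haveI : FiniteDimensional ℝ B := u.toLinearEquiv.finiteDimensional
  obtain ⟨C, v, hv1, hv2⟩ := hYW.scaled δ hδ B inferInstance
  refine ⟨C, u.trans v, ?_⟩
  have e1 : ((u.trans v : A ≃L[ℝ] C) : A →L[ℝ] C) =
      (v : B →L[ℝ] C).comp (u : A →L[ℝ] B) := by rfl
  have e2 : (((u.trans v).symm : C ≃L[ℝ] A) : C →L[ℝ] A) =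
      (u.symm : B →L[ℝ] A).comp (v.symm : C →L[ℝ] B) := by rfl
  rw [e1, e2]
  have h1 : ‖(v : B →L[ℝ] C).comp (u : A →L[ℝ] B)‖ ≤ (1 + δ) * (1 + δ) := by
    calc ‖(v : B →L[ℝ] C).comp (u : A →L[ℝ] B)‖ ≤ ‖(v : B →L[ℝ] C)‖ * ‖(u : A →L[ℝ] B)‖ :=
          ContinuousLinearMap.opNorm_comp_le _ _
      _ ≤ (1 + δ) * (1 + δ) := by
          apply mul_le_mul hv1 hu1 (ContinuousLinearMap.opNorm_nonneg _) (by positivity)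
  have h2 : ‖(u.symm : B →L[ℝ] A).comp (v.symm : C →L[ℝ] B)‖ ≤ 1 := by
    calc ‖(u.symm : B →L[ℝ] A).comp (v.symm : C →L[ℝ] B)‖
        ≤ ‖(u.symm : B →L[ℝ] A)‖ * ‖(v.symm : C →L[ℝ] B)‖ :=
          ContinuousLinearMap.opNorm_comp_le _ _
      _ ≤ 1 * 1 := mul_le_mul hu2 hv2 (ContinuousLinearMap.opNorm_nonneg _) zero_le_one
      _ = 1 := one_mul 1
  calc ‖(v : B →L[ℝ] C).comp (u : A →L[ℝ] B)‖ * ‖(u.symm : B →L[ℝ] A).comp (v.symm : C →L[ℝ] B)‖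
      ≤ ((1 + δ) * (1 + δ)) * 1 := mul_le_mul h1 h2 (ContinuousLinearMap.opNorm_nonneg _) (by positivity)
    _ ≤ 1 + ε := by nlinarith

lemma linearIsometry_finRep (f : X →ₗᵢ[ℝ] Y) : FinRep X Y := by
  intro ε hε A hA
  have := exists_equiv_of_bounds A (f.toLinearMap.comp A.subtype) 1 1 one_pos zero_le_one
    (fun a => by simp [f.norm_map]) (fun a => by simp [f.norm_map])
  obtain ⟨B, u, h1, h2⟩ := this
  refine ⟨B, u, ?_⟩
  rw [inv_one] at h2
  nlinarith [norm_nonneg (u : A →L[ℝ] B), norm_nonneg (u.symm : B →L[ℝ] A)]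
end

section lpStuff
variable {Z : Type*} [NormedAddCommGroup Z] [NormedSpace ℝ Z] (p : ℝ≥0∞) [Fact (1 ≤ p)]

lemma lp_single_add (i : ℕ) (a b : Z) :
    lp.single p i (a + b) = (lp.single p i a : lp (fun _ : ℕ => Z) p) + lp.single p i b := by
  apply lp.ext
  funext j
  rw [lp.coeFn_add, Pi.add_apply]
  by_cases h : j = i
  · subst h
    rw [lp.single_apply_self, lp.single_apply_self, lp.single_apply_self]
  · rw [lp.single_apply_ne p i _ h, lp.single_apply_ne p i _ h, lp.single_apply_ne p i _ h,
      add_zero]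

/-- `lp.single` as a linear map. -/
noncomputable def lpSingleL (i : ℕ) : Z →ₗ[ℝ] lp (fun _ : ℕ => Z) p :=
{ toFun := fun a => lp.single p i a,
  map_add' := fun a b => lp_single_add p i a b,
  map_smul' := fun c a => by
    apply lp.ext
    funext j
    show (lp.single p i (c • a) : ∀ _ : ℕ, Z) j = ((c • lp.single p i a : lp (fun _ : ℕ => Z) p) : ∀ _ : ℕ, Z) j
    rw [lp.coeFn_smul, Pi.smul_apply]
    by_cases h : j = i
    · subst h
      rw [lp.single_apply_self, lp.single_apply_self]
    · rw [lp.single_apply_ne p i _ h, lp.single_apply_ne p i _ h, smul_zero] }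

/-- evaluation at a coordinate as a linear map. -/
noncomputable def lpEvalL (i : ℕ) : lp (fun _ : ℕ => Z) p →ₗ[ℝ] Z where
  toFun f := f i
  map_add' f g := by simp [lp.coeFn_add]
  map_smul' c f := by simp [lp.coeFn_smul]

@[simp] lemma lpSingleL_apply (i : ℕ) (a : Z) : lpSingleL p i a = lp.single p i a := by
  unfold lpSingleL
  rfl
@[simp] lemma lpEvalL_apply (i : ℕ) (f : lp (fun _ : ℕ => Z) p) : lpEvalL p i f = f i := rfl

lemma trunc_coord (x : ∀ _ : ℕ, Z) (s : Finset ℕ) (j : ℕ) :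
    ((∑ i ∈ s, lp.single p i (x i) : lp (fun _ : ℕ => Z) p) : ∀ _ : ℕ, Z) j
      = if j ∈ s then x j else 0 := by
  rw [lp.coeFn_sum, Finset.sum_apply]
  simp only [lp.single_apply]
  rw [Finset.sum_pi_single]

/-- The truncation to `Finset.range N` as a linear map. -/
noncomputable def lpTruncL (N : ℕ) : lp (fun _ : ℕ => Z) p →ₗ[ℝ] lp (fun _ : ℕ => Z) p :=
  ∑ i ∈ Finset.range N, (lpSingleL p i).comp (lpEvalL p i)

lemma lpTruncL_eq (N : ℕ) (f : lp (fun _ : ℕ => Z) p) :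
    lpTruncL p N f = ∑ i ∈ Finset.range N, lp.single p i (f i) := by
  rw [lpTruncL, LinearMap.coe_sum, Finset.sum_apply]
  exact Finset.sum_congr rfl fun i _ => by rw [LinearMap.comp_apply, lpSingleL_apply]; rfl

lemma lp_tail_small (hp : p ≠ ∞) (f : lp (fun _ : ℕ => Z) p) (δ : ℝ) (hδ : 0 < δ) :
    ∃ N : ℕ, ∀ n, N ≤ n → ‖lpTruncL p n f - f‖ ≤ δ := by
  have hs := (lp.hasSum_single hp f).tendsto_sum_nat
  rw [Metric.tendsto_atTop] at hs
  obtain ⟨N, hN⟩ := hs δ hδ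
  refine ⟨N, fun n hn => ?_⟩
  have := hN n hn
  rw [dist_eq_norm] at this
  rw [lpTruncL_eq]
  exact le_of_lt this

end lpStuff
section Trunc
variable {Z : Type*} [NormedAddCommGroup Z] [NormedSpace ℝ Z] [CompleteSpace Z]
  (p : ℝ≥0∞) [Fact (1 ≤ p)]

lemma exists_good_trunc (hp : p ≠ ∞) (A : Subspace ℝ (lp (fun _ : ℕ => Z) p))
    [FiniteDimensional ℝ A] (δ : ℝ) (hδ : 0 < δ) :
    ∃ N : ℕ, ∀ a : A, ‖lpTruncL p N (a : lp (fun _ : ℕ => Z) p) - (a : lp (fun _ : ℕ => Z) p)‖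
      ≤ δ * ‖a‖ := by
  classical
  obtain ⟨n, b⟩ : ∃ n : ℕ, Nonempty (Module.Basis (Fin n) ℝ A) :=
    ⟨Module.finrank ℝ A, ⟨Module.finBasis ℝ A⟩⟩
  obtain ⟨b⟩ := b
  -- continuous coordinate functionals
  let φ : Fin n → (A →L[ℝ] ℝ) := fun i => LinearMap.toContinuousLinearMap (b.coord i)
  set C : ℝ := (∑ i, ‖φ i‖) + 1 with hC
  have hCpos : 0 < C := by
    have : (0:ℝ) ≤ ∑ i, ‖φ i‖ := Finset.sum_nonneg fun i _ => ContinuousLinearMap.opNorm_nonneg _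
    linarith
  -- choose a common truncation level for the basis vectors
  have hNi : ∀ i : Fin n, ∃ N : ℕ, ∀ m, N ≤ m →
      ‖lpTruncL p m ((b i : lp (fun _ : ℕ => Z) p)) - (b i : lp (fun _ : ℕ => Z) p)‖ ≤ δ / C :=
    fun i => lp_tail_small p hp _ (δ / C) (by positivity)
  choose Ni hNi' using hNi
  set N : ℕ := Finset.univ.sup Ni with hN
  refine ⟨N, fun a => ?_⟩
  have hbi : ∀ i : Fin n,
      ‖lpTruncL p N ((b i : lp (fun _ : ℕ => Z) p)) - (b i : lp (fun _ : ℕ => Z) p)‖ ≤ δ / C :=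
    fun i => hNi' i N (Finset.le_sup (Finset.mem_univ i))
  -- expand a in the basis
  have ha : (a : lp (fun _ : ℕ => Z) p) = ∑ i, b.repr a i • (b i : lp (fun _ : ℕ => Z) p) := by
    conv_lhs => rw [← b.sum_repr a]
    push_cast
    rfl
  have key : lpTruncL p N (a : lp (fun _ : ℕ => Z) p) - (a : lp (fun _ : ℕ => Z) p)
      = ∑ i, b.repr a i •
        (lpTruncL p N ((b i : lp (fun _ : ℕ => Z) p)) - (b i : lp (fun _ : ℕ => Z) p)) := by
    rw [ha, map_sum]
    rw [← Finset.sum_sub_distrib]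
    refine Finset.sum_congr rfl fun i _ => ?_
    rw [map_smul, smul_sub]
  rw [key]
  have hcoord : ∀ i : Fin n, |b.repr a i| ≤ ‖φ i‖ * ‖a‖ := by
    intro i
    have := (φ i).le_opNorm a
    simpa [φ, Real.norm_eq_abs] using this
  calc ‖∑ i, b.repr a i •
        (lpTruncL p N ((b i : lp (fun _ : ℕ => Z) p)) - (b i : lp (fun _ : ℕ => Z) p))‖
      ≤ ∑ i, ‖b.repr a i •
        (lpTruncL p N ((b i : lp (fun _ : ℕ => Z) p)) - (b i : lp (fun _ : ℕ => Z) p))‖ :=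
        norm_sum_le _ _
    _ ≤ ∑ i, (‖φ i‖ * ‖a‖) * (δ / C) := by
        refine Finset.sum_le_sum fun i _ => ?_
        rw [norm_smul, Real.norm_eq_abs]
        exact mul_le_mul (hcoord i) (hbi i) (norm_nonneg _) (by positivity)
    _ = (∑ i, ‖φ i‖) * ‖a‖ * (δ / C) := by rw [← Finset.sum_mul, ← Finset.sum_mul]
    _ ≤ C * ‖a‖ * (δ / C) := by
        have h1 : (∑ i, ‖φ i‖) ≤ C := by rw [hC]; linarith
        have : (0:ℝ) ≤ ‖a‖ * (δ / C) := by positivity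
        nlinarith [norm_nonneg a]
    _ = δ * ‖a‖ := by field_simp
end Trunc
lemma rpow_le_rpow_cancel {x y c : ℝ} (hy : 0 ≤ y) (hc : 0 < c) (h : x ^ c ≤ y ^ c) :
    x ≤ y := by
  by_contra hxy
  push_neg at hxy
  exact absurd (Real.rpow_lt_rpow hy hxy hc) (not_lt.mpr h)

section Main
variable {Z : Type*} [NormedAddCommGroup Z] [NormedSpace ℝ Z] [CompleteSpace Z]
  {Y : Type*} [NormedAddCommGroup Y] [NormedSpace ℝ Y] [CompleteSpace Y]

lemma FinRep.lpSum (p : ℝ≥0∞) [Fact (1 ≤ p)] (hp : p ≠ ∞) (hZY : FinRep Z Y) :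
    FinRep (lp (fun _ : ℕ => Z) p) (lp (fun _ : ℕ => Y) p) := by
  intro ε hε A hA
  classical
  have hp1 : (1:ℝ≥0∞) ≤ p := Fact.out
  have hpt : 0 < p.toReal := by
    refine ENNReal.toReal_pos ?_ hp
    intro h0
    rw [h0] at hp1
    simp at hp1
  set δ := min (ε/8) (1/2) with hδdef
  have hδ : 0 < δ := lt_min (by positivity) (by norm_num)
  have hδ2 : δ ≤ 1/2 := min_le_right _ _
  have hδε : 8 * δ ≤ ε := by
    have := min_le_left (ε/8) (1/2); nlinarith
  obtain ⟨N, hN⟩ := exists_good_trunc p hp A δ hδ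
  set T : A →ₗ[ℝ] lp (fun _ : ℕ => Z) p := (lpTruncL p N).comp A.subtype with hT
  set Ai : ℕ → Subspace ℝ Z := fun i => LinearMap.range ((lpEvalL p i).comp T) with hAi
  have hch : ∀ i : ℕ, ∃ B : Subspace ℝ Y, ∃ u : (Ai i) ≃L[ℝ] B,
      ‖(u : (Ai i) →L[ℝ] B)‖ ≤ 1 + δ ∧ ‖(u.symm : B →L[ℝ] (Ai i))‖ ≤ 1 :=
    fun i => hZY.scaled δ hδ (Ai i) inferInstance
  choose Bs u hu1 hu2 using hch
  set g : ∀ i : ℕ, A →ₗ[ℝ] Ai i := fun i => ((lpEvalL p i).comp T).rangeRestrict with hg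
  set S : A →ₗ[ℝ] lp (fun _ : ℕ => Y) p :=
    ∑ i ∈ Finset.range N, (lpSingleL p i).comp ((Bs i).subtype.comp
      (((u i).toLinearEquiv.toLinearMap).comp (g i))) with hS
  -- basic coordinate facts
  have hTa : ∀ a : A, T a = ∑ i ∈ Finset.range N,
      lp.single p i ((a : lp (fun _ : ℕ => Z) p) i) := by
    intro a
    rw [hT, LinearMap.comp_apply, lpTruncL_eq]
    rfl
  have hga : ∀ a : A, ∀ i ∈ Finset.range N,
      ((g i a : Z)) = (a : lp (fun _ : ℕ => Z) p) i := by
    intro a i hi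
    have h1 : ((g i a : Z)) = (T a : ∀ _ : ℕ, Z) i := rfl
    rw [h1, hTa a, trunc_coord, if_pos hi]
  have hSa : ∀ a : A, S a = ∑ i ∈ Finset.range N,
      lp.single p i (((u i) (g i a) : Y)) := by
    intro a
    rw [hS, LinearMap.coe_sum, Finset.sum_apply]
    exact Finset.sum_congr rfl fun i _ => rfl
  -- norms
  have hTnorm : ∀ a : A, ‖T a‖ ^ p.toReal
      = ∑ i ∈ Finset.range N, ‖(a : lp (fun _ : ℕ => Z) p) i‖ ^ p.toReal := by
    intro a
    rw [hTa a]
    exact lp.norm_sum_single hpt _ _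
  have hSnorm : ∀ a : A, ‖S a‖ ^ p.toReal
      = ∑ i ∈ Finset.range N, ‖((u i) (g i a) : Y)‖ ^ p.toReal := by
    intro a
    rw [hSa a]
    exact lp.norm_sum_single hpt (fun i => (((u i) (g i a) : Y))) _
  -- coordinatewise comparison
  have hup : ∀ a : A, ∀ i ∈ Finset.range N,
      ‖((u i) (g i a) : Y)‖ ≤ (1 + δ) * ‖(a : lp (fun _ : ℕ => Z) p) i‖ := by
    intro a i hi
    have h2 : ‖(u i) (g i a)‖ ≤ ‖((u i : (Ai i) →L[ℝ] Bs i))‖ * ‖g i a‖ :=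
      ((u i : (Ai i) →L[ℝ] Bs i)).le_opNorm _
    have h3 : ‖g i a‖ = ‖(a : lp (fun _ : ℕ => Z) p) i‖ := by
      have h3' : ‖g i a‖ = ‖((g i a : Z))‖ := rfl
      rw [h3', hga a i hi]
    have h4 : ‖((u i) (g i a) : Y)‖ = ‖(u i) (g i a)‖ := rfl
    rw [h4]
    rw [h3] at h2
    exact h2.trans (mul_le_mul_of_nonneg_right (hu1 i) (norm_nonneg _))
  have hlow : ∀ a : A, ∀ i ∈ Finset.range N,
      ‖(a : lp (fun _ : ℕ => Z) p) i‖ ≤ ‖((u i) (g i a) : Y)‖ := by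
    intro a i hi
    have h3 : ‖(a : lp (fun _ : ℕ => Z) p) i‖ = ‖g i a‖ := by
      have : ‖g i a‖ = ‖((g i a : Z))‖ := rfl
      rw [this, hga a i hi]
    rw [h3]
    have h4 : g i a = (u i).symm ((u i) (g i a)) := ((u i).symm_apply_apply _).symm
    calc ‖g i a‖ = ‖(u i).symm ((u i) (g i a))‖ := by rw [← h4]
      _ ≤ ‖((u i).symm : Bs i →L[ℝ] (Ai i))‖ * ‖(u i) (g i a)‖ :=
          ((u i).symm : Bs i →L[ℝ] (Ai i)).le_opNorm _
      _ ≤ 1 * ‖(u i) (g i a)‖ := mul_le_mul_of_nonneg_right (hu2 i) (norm_nonneg _)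
      _ = ‖((u i) (g i a) : Y)‖ := by rw [one_mul]; rfl
  -- compare ‖S a‖ with ‖T a‖
  have hS_le : ∀ a : A, ‖S a‖ ≤ (1 + δ) * ‖T a‖ := by
    intro a
    refine rpow_le_rpow_cancel (by positivity) hpt ?_
    rw [Real.mul_rpow (by positivity) (norm_nonneg _), hSnorm a, hTnorm a, Finset.mul_sum]
    refine Finset.sum_le_sum fun i hi => ?_
    calc ‖((u i) (g i a) : Y)‖ ^ p.toReal
        ≤ ((1 + δ) * ‖(a : lp (fun _ : ℕ => Z) p) i‖) ^ p.toReal :=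
          Real.rpow_le_rpow (norm_nonneg _) (hup a i hi) hpt.le
      _ = (1 + δ) ^ p.toReal * ‖(a : lp (fun _ : ℕ => Z) p) i‖ ^ p.toReal :=
          Real.mul_rpow (by positivity) (norm_nonneg _)
  have hS_ge : ∀ a : A, ‖T a‖ ≤ ‖S a‖ := by
    intro a
    refine rpow_le_rpow_cancel (norm_nonneg _) hpt ?_
    rw [hSnorm a, hTnorm a]
    refine Finset.sum_le_sum fun i hi => ?_
    exact Real.rpow_le_rpow (norm_nonneg _) (hlow a i hi) hpt.le
  -- compare ‖T a‖ with ‖a‖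
  have hTub : ∀ a : A, ‖T a‖ ≤ (1 + δ) * ‖a‖ := by
    intro a
    have h1 := hN a
    have h2 : T a = lpTruncL p N (a : lp (fun _ : ℕ => Z) p) := rfl
    have h3 : ‖(a : lp (fun _ : ℕ => Z) p)‖ = ‖a‖ := rfl
    calc ‖T a‖ = ‖(T a - (a : lp (fun _ : ℕ => Z) p)) + (a : lp (fun _ : ℕ => Z) p)‖ := by
          rw [sub_add_cancel]
      _ ≤ ‖T a - (a : lp (fun _ : ℕ => Z) p)‖ + ‖(a : lp (fun _ : ℕ => Z) p)‖ := norm_add_le _ _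
      _ ≤ δ * ‖a‖ + ‖a‖ := by rw [h3]; exact add_le_add_left (h2 ▸ h1) _
      _ = (1 + δ) * ‖a‖ := by ring
  have hTlb : ∀ a : A, (1 - δ) * ‖a‖ ≤ ‖T a‖ := by
    intro a
    have h1 := hN a
    have h2 : T a = lpTruncL p N (a : lp (fun _ : ℕ => Z) p) := rfl
    have h3 : ‖(a : lp (fun _ : ℕ => Z) p)‖ = ‖a‖ := rfl
    have h4 : ‖(a : lp (fun _ : ℕ => Z) p)‖ ≤ ‖T a‖ + ‖T a - (a : lp (fun _ : ℕ => Z) p)‖ := by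
      calc ‖(a : lp (fun _ : ℕ => Z) p)‖ = ‖T a - (T a - (a : lp (fun _ : ℕ => Z) p))‖ := by
            rw [sub_sub_cancel]
        _ ≤ ‖T a‖ + ‖T a - (a : lp (fun _ : ℕ => Z) p)‖ := norm_sub_le _ _
    rw [h3] at h4
    have h5 : ‖T a - (a : lp (fun _ : ℕ => Z) p)‖ ≤ δ * ‖a‖ := h2 ▸ h1
    linarith
  -- final bounds for S
  have hl : ∀ a : A, (1 - δ) * ‖a‖ ≤ ‖S a‖ := fun a => (hTlb a).trans (hS_ge a)
  have hu' : ∀ a : A, ‖S a‖ ≤ ((1 + δ) * (1 + δ)) * ‖a‖ := by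
    intro a
    calc ‖S a‖ ≤ (1 + δ) * ‖T a‖ := hS_le a
      _ ≤ (1 + δ) * ((1 + δ) * ‖a‖) := mul_le_mul_of_nonneg_left (hTub a) (by positivity)
      _ = ((1 + δ) * (1 + δ)) * ‖a‖ := by ring
  obtain ⟨B₀, u₀, hn1, hn2⟩ := exists_equiv_of_bounds A S (1 - δ) ((1 + δ) * (1 + δ))
    (by linarith) (by positivity) hl hu'
  refine ⟨B₀, u₀, ?_⟩
  have hprod : ‖(u₀ : A →L[ℝ] B₀)‖ * ‖(u₀.symm : B₀ →L[ℝ] A)‖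
      ≤ ((1 + δ) * (1 + δ)) * (1 - δ)⁻¹ :=
    mul_le_mul hn1 hn2 (ContinuousLinearMap.opNorm_nonneg _) (by positivity)
  refine hprod.trans ?_
  rw [inv_eq_one_div, mul_one_div, div_le_iff₀ (by linarith : (0:ℝ) < 1 - δ)]
  nlinarith [mul_nonneg (by linarith : (0:ℝ) ≤ ε - 8 * δ) (by linarith : (0:ℝ) ≤ 1 - δ),
    mul_nonneg hδ.le hδ.le]
end Main


section Assemble
variable {Z : Type*} [NormedAddCommGroup Z] [NormedSpace ℝ Z] [CompleteSpace Z]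

lemma finRep_lpSingle (p : ℝ≥0∞) [Fact (1 ≤ p)] (hp : p ≠ ∞) :
    FinRep Z (lp (fun _ : ℕ => Z) p) := by
  have hp1 : (1:ℝ≥0∞) ≤ p := Fact.out
  have hpt : 0 < p.toReal := by
    refine ENNReal.toReal_pos ?_ hp
    intro h0
    rw [h0] at hp1
    simp at hp1
  refine linearIsometry_finRep ⟨lpSingleL p 0, fun a => ?_⟩
  simpa using lp.norm_single (E := fun _ : ℕ => Z) (zero_lt_one.trans_le hp1) 0 a

end Assemble

/-- If some Banach space `Y` finitely equivalent to `X` has `ℓ_p(Y)` finitely equivalent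
to `X`, then `ℓ_p(Z)` is finitely equivalent to `X` for every Banach space `Z` finitely
equivalent to `X`. -/
theorem lpSum_finEquiv_of_exists_lpSum_finEquiv
    (p : ℝ≥0∞) [Fact (1 ≤ p)] (hp : p ≠ ∞)
    (X : Type) [NormedAddCommGroup X] [NormedSpace ℝ X] [CompleteSpace X]
    (h : ∃ Y : BanachSpace, FinEquiv X Y.carrier ∧
      FinEquiv X (lp (fun _ : ℕ => Y.carrier) p)) :
    ∀ Z : BanachSpace, FinEquiv X Z.carrier →
      FinEquiv X (lp (fun _ : ℕ => Z.carrier) p) := by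
  obtain ⟨Ybs, hXY, hXlpY⟩ := h
  intro Zbs hXZ
  constructor
  · exact hXZ.1.trans (finRep_lpSingle p hp)
  · have h1 : FinRep Zbs.carrier Ybs.carrier := hXZ.2.trans hXY.1
    exact (h1.lpSum p hp).trans hXlpY.2
end

section
/- Let (x_n) be a spreading and symmetric sequence in a real Banach space such that for each m the function N_m(a_1,…,a_m) = ‖Σ_{k≤m} a_k x_k‖ is a norm on ℝ^m. Then for any two infinite linearly ordered sets (I,≪) and (J,<') of the same cardinality, the tower spaces X_N(I) and X_N(J) are isometrically isomorphic. -/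
open scoped ENNReal ZeroAtInfty

section Sequences

variable {X : Type*} [NormedAddCommGroup X] [NormedSpace ℝ X]
variable {Y : Type*} [NormedAddCommGroup Y] [NormedSpace ℝ Y]

/-- A spreading sequence. -/
def IsSpreadingSeq (x : ℕ → X) : Prop :=
  ∀ (n : ℕ) (a : Fin n → ℝ) (i j : Fin n → ℕ), StrictMono i → StrictMono j →
    ‖∑ k, a k • x (i k)‖ = ‖∑ k, a k • x (j k)‖

/-- A symmetric sequence. -/
def IsSymmetricSeq (x : ℕ → X) : Prop :=
  ∀ (n : ℕ) (a : Fin n → ℝ) (i : Fin n → ℕ), Function.Injective i →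
    ∀ ς : Equiv.Perm (Fin n), ‖∑ k, a k • x (i k)‖ = ‖∑ k, a (ς k) • x (i k)‖

/-- A 1-unconditional sequence. -/
def IsOneUnconditionalSeq (x : ℕ → X) : Prop :=
  ∀ (n : ℕ) (a ε : Fin n → ℝ), (∀ k, ε k = 1 ∨ ε k = -1) →
    ∀ i : Fin n → ℕ, StrictMono i →
      ‖∑ k, (ε k * a k) • x (i k)‖ = ‖∑ k, a k • x (i k)‖

/-- A subsymmetric sequence: spreading and 1-unconditional. -/
def IsSubsymmetricSeq (x : ℕ → X) : Prop :=
  IsSpreadingSeq x ∧ IsOneUnconditionalSeq x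

/-- `C`-equivalence of two sequences (possibly in different spaces). -/
def SeqEquiv (C : ℝ) (x : ℕ → X) (y : ℕ → Y) : Prop :=
  ∀ (n : ℕ) (a : Fin n → ℝ),
    C⁻¹ * ‖∑ k, a k • x (k : ℕ)‖ ≤ ‖∑ k, a k • y (k : ℕ)‖ ∧
      ‖∑ k, a k • y (k : ℕ)‖ ≤ C * ‖∑ k, a k • x (k : ℕ)‖

end Sequences

/-- `Z` is a realization of the tower space `X_N(I)` built from the spreading sequence `x`:
there is a family `(z_i)_{i ∈ I}` in `Z` with dense linear span whose finite linear
combinations (taken along increasing indices) have the norms prescribed by `x`. -/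
def IsTowerRealization {X : Type*} [NormedAddCommGroup X] [NormedSpace ℝ X] (x : ℕ → X)
    (I : Type*) [LinearOrder I]
    (Z : Type*) [NormedAddCommGroup Z] [NormedSpace ℝ Z] : Prop :=
  ∃ z : I → Z,
    (Submodule.span ℝ (Set.range z)).topologicalClosure = ⊤ ∧
      ∀ (n : ℕ) (a : Fin n → ℝ) (i : Fin n → I), StrictMono i →
        ‖∑ k, a k • z (i k)‖ = ‖∑ k, a k • x (k : ℕ)‖

section Aux

variable {X : Type*} [NormedAddCommGroup X] [NormedSpace ℝ X] {x : ℕ → X}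
variable {K : Type*} [LinearOrder K] {Z : Type*} [NormedAddCommGroup Z] [NormedSpace ℝ Z]
variable {z : K → Z}

lemma key_norm (hsym : IsSymmetricSeq x)
    (hz : ∀ (n : ℕ) (a : Fin n → ℝ) (i : Fin n → K), StrictMono i →
        ‖∑ k, a k • z (i k)‖ = ‖∑ k, a k • x (k : ℕ)‖)
    (n : ℕ) (a : Fin n → ℝ) (i : Fin n → K) (hi : Function.Injective i) :
    ‖∑ k, a k • z (i k)‖ = ‖∑ k, a k • x (k : ℕ)‖ := by
  set σ := Tuple.sort i with hσ
  have hmono : StrictMono (i ∘ σ) :=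
    (Tuple.monotone_sort i).strictMono_of_injective (hi.comp σ.injective)
  have h1 : ∑ k, a k • z (i k) = ∑ k, (a ∘ σ) k • z ((i ∘ σ) k) :=
    (Equiv.sum_comp σ (fun k => a k • z (i k))).symm
  rw [h1, hz n (a ∘ σ) (i ∘ σ) hmono]
  exact (hsym n a (fun k => (k : ℕ)) (fun _ _ h => Fin.val_injective h) σ).symm

lemma finset_to_fin_sum (s : Finset K) {M : Type*} [AddCommMonoid M] (f : K → M) :
    ∑ i ∈ s, f i = ∑ k : Fin s.card, f ((s.orderIsoOfFin rfl k : s) : K) :=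
  (Finset.sum_coe_sort s f).symm.trans
    (Equiv.sum_comp (s.orderIsoOfFin rfl).toEquiv (fun i : s => f i)).symm

lemma orderIsoOfFin_strictMono (s : Finset K) :
    StrictMono (fun k => ((s.orderIsoOfFin rfl k : s) : K)) :=
  fun _ _ h => Subtype.coe_lt_coe.mpr ((s.orderIsoOfFin rfl).strictMono h)

lemma tower_finset_norm
    (hz : ∀ (n : ℕ) (a : Fin n → ℝ) (i : Fin n → K), StrictMono i →
        ‖∑ k, a k • z (i k)‖ = ‖∑ k, a k • x (k : ℕ)‖)
    (s : Finset K) (c : K → ℝ) :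
    ‖∑ i ∈ s, c i • z i‖ =
      ‖∑ k : Fin s.card, c ((s.orderIsoOfFin rfl k : s) : K) • x (k : ℕ)‖ := by
  rw [finset_to_fin_sum s (fun i => c i • z i)]
  exact hz _ _ _ (orderIsoOfFin_strictMono s)

lemma tower_linearIndependent
    (hnorm : ∀ (n : ℕ) (a : Fin n → ℝ), ‖∑ k, a k • x (k : ℕ)‖ = 0 → a = 0)
    (hz : ∀ (n : ℕ) (a : Fin n → ℝ) (i : Fin n → K), StrictMono i →
        ‖∑ k, a k • z (i k)‖ = ‖∑ k, a k • x (k : ℕ)‖) :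
    LinearIndependent ℝ z := by
  rw [linearIndependent_iff']
  intro s g hsum i hi
  have h0 : ‖∑ i ∈ s, g i • z i‖ = 0 := by rw [hsum, norm_zero]
  rw [tower_finset_norm hz s g] at h0
  have h4 := congrFun (hnorm _ _ h0) ((s.orderIsoOfFin rfl).symm ⟨i, hi⟩)
  simpa using h4

end Aux

/-- If the spreading sequence `x` is symmetric (and generates genuine norms), then any two
tower spaces `X_N(I)`, `X_N(J)` over infinite linearly ordered sets of the same cardinality
are isometrically isomorphic. -/
theorem tower_isometric_of_symmetric
    (X : Type) [NormedAddCommGroup X] [NormedSpace ℝ X] [CompleteSpace X]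
    (x : ℕ → X) (hspread : IsSpreadingSeq x) (hsym : IsSymmetricSeq x)
    (hnorm : ∀ (n : ℕ) (a : Fin n → ℝ), ‖∑ k, a k • x (k : ℕ)‖ = 0 → a = 0)
    (I J : Type) [LinearOrder I] [LinearOrder J] [Infinite I] [Infinite J]
    (hcard : Cardinal.mk I = Cardinal.mk J)
    (ZI : Type) [NormedAddCommGroup ZI] [NormedSpace ℝ ZI] [CompleteSpace ZI]
    (ZJ : Type) [NormedAddCommGroup ZJ] [NormedSpace ℝ ZJ] [CompleteSpace ZJ]
    (hZI : IsTowerRealization x I ZI) (hZJ : IsTowerRealization x J ZJ) :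
    Nonempty (ZI ≃ₗᵢ[ℝ] ZJ) := by
  classical
  obtain ⟨e⟩ := Cardinal.eq.mp hcard
  obtain ⟨zI, hdI, hzI⟩ := hZI
  obtain ⟨zJ, hdJ, hzJ⟩ := hZJ
  -- the key norm identity transferring between the two index sets
  have norm_eq : ∀ (s : Finset I) (c : I → ℝ),
      ‖∑ i ∈ s, c i • zI i‖ = ‖∑ i ∈ s, c i • zJ (e i)‖ := by
    intro s c
    rw [tower_finset_norm hzI s c,
      finset_to_fin_sum s (fun i => c i • zJ (e i))]
    exact (key_norm hsym hzJ s.card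
      (fun k => c ((s.orderIsoOfFin rfl k : s) : I))
      (fun k => e ((s.orderIsoOfFin rfl k : s) : I))
      (fun p q h => (orderIsoOfFin_strictMono s).injective (e.injective h))).symm
  -- linear independence and bases of the spans
  have hliI : LinearIndependent ℝ zI := tower_linearIndependent hnorm hzI
  have hliJ : LinearIndependent ℝ zJ := tower_linearIndependent hnorm hzJ
  set pI := Submodule.span ℝ (Set.range zI) with hpI
  set pJ := Submodule.span ℝ (Set.range zJ) with hpJ
  let bI : Module.Basis I ℝ pI := Module.Basis.span hliI
  let bJ : Module.Basis J ℝ pJ := Module.Basis.span hliJ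
  let f : pI ≃ₗ[ℝ] pJ := bI.equiv bJ e
  -- f is an isometry
  have hiso : ∀ v : pI, ‖((f v : pJ) : ZJ)‖ = ‖(v : ZI)‖ := by
    intro v
    set r := bI.repr v with hr
    have hv : v = ∑ i ∈ r.support, r i • bI i := by
      conv_lhs => rw [← bI.linearCombination_repr v]
      rw [Finsupp.linearCombination_apply, Finsupp.sum]
    have hcv : (v : ZI) = ∑ i ∈ r.support, r i • zI i := by
      rw [hv]
      push_cast
      refine Finset.sum_congr rfl fun i _ => ?_
      rw [Module.Basis.span_apply]
    have hcfv : ((f v : pJ) : ZJ) = ∑ i ∈ r.support, r i • zJ (e i) := by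
      rw [hv, map_sum]
      push_cast
      refine Finset.sum_congr rfl fun i _ => ?_
      show (((Module.Basis.span hliI).equiv (Module.Basis.span hliJ) e (r i • Module.Basis.span hliI i) : pJ) : ZJ)
          = r i • zJ (e i)
      rw [map_smul, Module.Basis.equiv_apply, Submodule.coe_smul, Module.Basis.span_apply]
    rw [hcv, hcfv]
    exact (norm_eq r.support r).symm
  let fiso : pI ≃ₗᵢ[ℝ] pJ := ⟨f, fun v => hiso v⟩
  -- density of the spans
  have hdrI : DenseRange (pI.subtypeL) := by
    have h := Submodule.dense_iff_topologicalClosure_eq_top.mpr hdI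
    have : Set.range (pI.subtypeL) = (pI : Set ZI) := Subtype.range_coe
    rw [DenseRange, this]
    exact h
  have hdrJ : DenseRange (pJ.subtypeL) := by
    have h := Submodule.dense_iff_topologicalClosure_eq_top.mpr hdJ
    have : Set.range (pJ.subtypeL) = (pJ : Set ZJ) := Subtype.range_coe
    rw [DenseRange, this]
    exact h
  have huiI : IsUniformInducing (pI.subtypeL) := isometry_subtype_coe.isUniformInducing
  have huiJ : IsUniformInducing (pJ.subtypeL) := isometry_subtype_coe.isUniformInducing
  -- the extensions
  let T0 : pI →L[ℝ] ZJ := pJ.subtypeL.comp fiso.toLinearIsometry.toContinuousLinearMap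
  let S0 : pJ →L[ℝ] ZI := pI.subtypeL.comp fiso.symm.toLinearIsometry.toContinuousLinearMap
  let extT : ZI →L[ℝ] ZJ := T0.extend pI.subtypeL
  let extS : ZJ →L[ℝ] ZI := S0.extend pJ.subtypeL
  have hT0 : ∀ v : pI, extT (pI.subtypeL v) = T0 v := fun v =>
    ContinuousLinearMap.extend_eq T0 hdrI huiI v
  have hS0 : ∀ v : pJ, extS (pJ.subtypeL v) = S0 v := fun v =>
    ContinuousLinearMap.extend_eq S0 hdrJ huiJ v
  -- extS is a left inverse of extT
  have hST : ∀ w : ZI, extS (extT w) = w := by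
    intro w
    refine hdrI.induction_on w
      (isClosed_eq (extS.continuous.comp extT.continuous) continuous_id) ?_
    intro v
    have h1 : extT (pI.subtypeL v) = pJ.subtypeL (fiso v) := hT0 v
    have h2 : extS (pJ.subtypeL (fiso v)) = pI.subtypeL (fiso.symm (fiso v)) := hS0 (fiso v)
    simp only [h1, h2, LinearIsometryEquiv.symm_apply_apply]
  have hTS : ∀ w : ZJ, extT (extS w) = w := by
    intro w
    refine hdrJ.induction_on w
      (isClosed_eq (extT.continuous.comp extS.continuous) continuous_id) ?_
    intro v
    have h1 : extS (pJ.subtypeL v) = pI.subtypeL (fiso.symm v) := hS0 v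
    have h2 : extT (pI.subtypeL (fiso.symm v)) = pJ.subtypeL (fiso (fiso.symm v)) :=
      hT0 (fiso.symm v)
    simp only [h1, h2, LinearIsometryEquiv.apply_symm_apply]
  -- extT preserves norms
  have hnm : ∀ w : ZI, ‖extT w‖ = ‖w‖ := by
    intro w
    refine hdrI.induction_on w
      (isClosed_eq (continuous_norm.comp extT.continuous) continuous_norm) ?_
    intro v
    have h1 : extT (pI.subtypeL v) = pJ.subtypeL (fiso v) := hT0 v
    rw [h1]
    exact hiso v
  let E := ContinuousLinearEquiv.equivOfInverse extT extS hST hTS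
  exact ⟨⟨E.toLinearEquiv, hnm⟩⟩
end
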